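/- Let b > 0, let k ≥ 1 be an integer, let β ∈ (0,1), and let Y_1,…,Y_k be independent real random variables each having the Laplace distribution with scale b. Set Y = Y_1 + ⋯ + Y_k. Then P( |Y| > 2b·√(2·ln(2/β))·max( √k, √(ln(2/β)) ) ) ≤ β. -/

import Mathlib

open MeasureTheory ProbabilityTheory Real Set
open scoped NNReal ENNReal
set_option maxHeartbeats 1000000

/-- The Laplace distribution on `ℝ` with scale `b`, given by the density
`x ↦ (2b)⁻¹ · exp(−|x|/b)` with respect to Lebesgue measure. -/
noncomputable def laplaceMeasure (b : ℝ) : Measure ℝ :=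
  volume.withDensity fun x => ENNReal.ofReal ((2 * b)⁻¹ * Real.exp (-|x| / b))

lemma exp_integral_Ioi' {c : ℝ} (hc : 0 < c) : ∫ x in Ioi (0:ℝ), Real.exp (-(c * x)) = c⁻¹ := by
  have h := integral_comp_mul_left_Ioi (fun y => Real.exp (-y)) 0 hc
  simp only [mul_zero, integral_exp_neg_Ioi_zero, smul_eq_mul, mul_one] at h
  exact h

lemma exp_integral_Iic' {c : ℝ} (hc : 0 < c) : ∫ x in Iic (0:ℝ), Real.exp (c * x) = c⁻¹ := by
  have h := integral_comp_neg_Ioi 0 (fun x => Real.exp (c * x))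
  simp only [neg_zero, mul_neg, ← neg_mul] at h
  rw [← h]
  simpa [neg_mul] using exp_integral_Ioi' hc

lemma exp_integrableOn_Ioi' {c : ℝ} (hc : 0 < c) :
    IntegrableOn (fun x => Real.exp (-(c * x))) (Ioi (0:ℝ)) := by
  simpa [neg_mul] using exp_neg_integrableOn_Ioi 0 hc

lemma exp_integrableOn_Iic' {c : ℝ} (hc : 0 < c) :
    IntegrableOn (fun x => Real.exp (c * x)) (Iic (0:ℝ)) := by
  have A : MeasurableEmbedding fun x : ℝ => -x :=
    (Homeomorph.neg ℝ).isClosedEmbedding.measurableEmbedding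
  have hvol : (volume : Measure ℝ) = Measure.map (fun x : ℝ => -x) volume := by
    simp [Measure.map_neg_eq_self]
  rw [IntegrableOn, hvol, Measure.restrict_map A.measurable measurableSet_Iic,
    A.integrable_map_iff]
  have : (fun x : ℝ => -x) ⁻¹' Iic 0 = Ici 0 := by ext x; simp
  rw [this]
  have h2 : IntegrableOn (fun x => Real.exp (c * -x)) (Ici (0:ℝ)) := by
    rw [integrableOn_Ici_iff_integrableOn_Ioi]
    simpa [neg_mul, mul_neg] using exp_integrableOn_Ioi' hc
  exact h2

lemma laplace_density_aux {b t : ℝ} (hb : 0 < b) (ht : |t| < b⁻¹) :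
    Integrable (fun x => (2*b)⁻¹ * Real.exp (-|x|/b) * Real.exp (t*x)) volume ∧
    ∫ x, (2*b)⁻¹ * Real.exp (-|x|/b) * Real.exp (t*x) = (1 - t^2*b^2)⁻¹ := by
  have ht1 : -b⁻¹ < t := neg_lt_of_abs_lt ht
  have ht2 : t < b⁻¹ := lt_of_abs_lt ht
  have hc1 : 0 < b⁻¹ + t := by linarith
  have hc2 : 0 < b⁻¹ - t := by linarith
  have hb' : b ≠ 0 := hb.ne'
  have key1 : ∀ x ∈ Iic (0:ℝ),
      (2*b)⁻¹ * Real.exp (-|x|/b) * Real.exp (t*x) = (2*b)⁻¹ * Real.exp ((b⁻¹ + t) * x) := by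
    intro x hx
    replace hx : x ≤ 0 := hx
    rw [abs_of_nonpos hx, mul_assoc, ← Real.exp_add]
    congr 2
    field_simp
  have key2 : ∀ x ∈ Ioi (0:ℝ),
      (2*b)⁻¹ * Real.exp (-|x|/b) * Real.exp (t*x) = (2*b)⁻¹ * Real.exp (-((b⁻¹ - t) * x)) := by
    intro x hx
    replace hx : 0 < x := hx
    rw [abs_of_pos hx, mul_assoc, ← Real.exp_add]
    congr 2
    field_simp
    ring
  have hIic : IntegrableOn (fun x => (2*b)⁻¹ * Real.exp (-|x|/b) * Real.exp (t*x)) (Iic 0) :=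
    IntegrableOn.congr_fun ((exp_integrableOn_Iic' hc1).const_mul ((2*b)⁻¹))
      (fun x hx => (key1 x hx).symm) measurableSet_Iic
  have hIoi : IntegrableOn (fun x => (2*b)⁻¹ * Real.exp (-|x|/b) * Real.exp (t*x)) (Ioi 0) :=
    IntegrableOn.congr_fun ((exp_integrableOn_Ioi' hc2).const_mul ((2*b)⁻¹))
      (fun x hx => (key2 x hx).symm) measurableSet_Ioi
  constructor
  · rw [← integrableOn_univ, ← Iic_union_Ioi (a := (0:ℝ))]
    exact hIic.union hIoi
  rw [← intervalIntegral.integral_Iic_add_Ioi hIic hIoi]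
  rw [setIntegral_congr_fun measurableSet_Iic key1,
    setIntegral_congr_fun measurableSet_Ioi key2,
    integral_const_mul, integral_const_mul, exp_integral_Iic' hc1, exp_integral_Ioi' hc2]
  have h7 : |t| * b < 1 := by
    have := mul_lt_mul_of_pos_right ht hb
    rwa [inv_mul_cancel₀ hb'] at this
  have h6 : (|t| * b) ^ 2 < 1 := by nlinarith [mul_nonneg (abs_nonneg t) hb.le]
  have h5 : t^2*b^2 < 1 := by rw [mul_pow, sq_abs] at h6; exact h6
  have h4 : (1 : ℝ) - t^2*b^2 ≠ 0 := by linarith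
  have hbt1 : -1 < b*t := by nlinarith
  have hbt2 : b*t < 1 := by nlinarith
  have hd1 : (1 : ℝ) + b*t ≠ 0 := by linarith
  have hd2 : (1 : ℝ) - b*t ≠ 0 := by linarith
  have r1 : (2*b) * (b⁻¹+t) = 2*(1+b*t) := by field_simp
  have r2 : (2*b) * (b⁻¹-t) = 2*(1-b*t) := by field_simp
  rw [← mul_inv, ← mul_inv, r1, r2]
  rw [mul_inv, mul_inv]
  field_simp
  have h4' : (1:ℝ) - b^2*t^2 ≠ 0 := by rw [mul_comm]; exact h4
  field_simp
  ring

lemma laplace_exp {b t : ℝ} (hb : 0 < b) (ht : |t| < b⁻¹) :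
    Integrable (fun x => Real.exp (t * x)) (laplaceMeasure b) ∧
    ∫ x, Real.exp (t * x) ∂(laplaceMeasure b) = (1 - t^2*b^2)⁻¹ := by
  have hnn : ∀ x : ℝ, 0 ≤ (2*b)⁻¹ * Real.exp (-|x|/b) := by
    intro x; positivity
  have hd : Measurable fun x : ℝ => ENNReal.ofReal ((2 * b)⁻¹ * Real.exp (-|x| / b)) := by
    apply ENNReal.measurable_ofReal.comp
    fun_prop
  have hfin : ∀ᵐ x ∂(volume : Measure ℝ),
      ENNReal.ofReal ((2 * b)⁻¹ * Real.exp (-|x| / b)) < ⊤ :=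
    Filter.Eventually.of_forall fun x => ENNReal.ofReal_lt_top
  have hfun : (fun x => Real.exp (t * x) * (ENNReal.ofReal ((2 * b)⁻¹ * Real.exp (-|x| / b))).toReal)
      = fun x => (2*b)⁻¹ * Real.exp (-|x|/b) * Real.exp (t*x) := by
    funext x
    rw [ENNReal.toReal_ofReal (hnn x)]
    ring
  constructor
  · rw [laplaceMeasure, integrable_withDensity_iff hd hfin, hfun]
    exact (laplace_density_aux hb ht).1
  · have hcoe : (fun x : ℝ => ENNReal.ofReal ((2 * b)⁻¹ * Real.exp (-|x| / b)))
        = fun x : ℝ => (((2 * b)⁻¹ * Real.exp (-|x| / b)).toNNReal : ℝ≥0∞) := rfl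
    rw [laplaceMeasure, hcoe,
      integral_withDensity_eq_integral_smul (by fun_prop) (fun x => Real.exp (t * x))]
    rw [← (laplace_density_aux hb ht).2]
    congr 1
    funext x
    simp only [NNReal.smul_def, smul_eq_mul, Real.coe_toNNReal _ (hnn x)]

theorem sum_of_laplace_tail_bound
    {Ω : Type*} [MeasurableSpace Ω] (μ : Measure Ω) [IsProbabilityMeasure μ]
    (b : ℝ) (hb : 0 < b) (k : ℕ) (hk : 1 ≤ k) (β : ℝ)
    (hβ : β ∈ Set.Ioo (0 : ℝ) 1)
    (Y : Fin k → Ω → ℝ) (hmeas : ∀ i, Measurable (Y i))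
    (hindep : iIndepFun Y μ)
    (hlap : ∀ i, μ.map (Y i) = laplaceMeasure b) :
    μ {ω | 2 * b * Real.sqrt (2 * Real.log (2 / β)) *
        max (Real.sqrt k) (Real.sqrt (Real.log (2 / β))) < |∑ i, Y i ω|}
      ≤ ENNReal.ofReal β := by
  obtain ⟨hβ0, hβ1⟩ := hβ
  set L : ℝ := Real.log (2 / β) with hLdef
  have hL : 0 < L := Real.log_pos (by rw [lt_div_iff₀ hβ0]; linarith)
  set m : ℝ := max (k : ℝ) L with hmdef
  have hk1 : (1:ℝ) ≤ (k:ℝ) := by exact_mod_cast hk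
  have hkm : (k:ℝ) ≤ m := le_max_left _ _
  have hLm : L ≤ m := le_max_right _ _
  have hm : 0 < m := lt_of_lt_of_le hL hLm
  set t : ℝ := Real.sqrt (L / (2*m)) / b with htdef
  have hquot : 0 < L / (2*m) := by positivity
  have ht_pos : 0 < t := by positivity
  have htb : t * b = Real.sqrt (L / (2*m)) := by
    rw [htdef, div_mul_cancel₀ _ hb.ne']
  have htbsq : t^2 * b^2 = L / (2*m) := by
    rw [← mul_pow, htb, Real.sq_sqrt hquot.le]
  have hx_half : t^2*b^2 ≤ 1/2 := by
    rw [htbsq, div_le_iff₀ (by positivity)]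
    linarith
  have ht_lt : |t| < b⁻¹ := by
    rw [abs_of_pos ht_pos, ← one_div, lt_div_iff₀ hb, htb]
    have h1 : L / (2*m) < 1 := by
      rw [div_lt_one (by positivity)]; linarith
    have h2 := Real.sqrt_lt_sqrt hquot.le h1
    simpa using h2
  have ht_lt' : |(-t)| < b⁻¹ := by rwa [abs_neg]
  -- per-coordinate integrability and mgf
  have hInt : ∀ s : ℝ, |s| < b⁻¹ → ∀ i, Integrable (fun ω => Real.exp (s * Y i ω)) μ := by
    intro s hs i
    have h1 := (laplace_exp hb hs).1
    rw [← hlap i] at h1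
    have hg : AEStronglyMeasurable (fun x => Real.exp (s * x)) (μ.map (Y i)) :=
      Continuous.aestronglyMeasurable (by continuity)
    exact (integrable_map_measure hg (hmeas i).aemeasurable).1 h1
  have hmgf : ∀ s : ℝ, |s| < b⁻¹ → ∀ i, mgf (Y i) μ s = (1 - s^2*b^2)⁻¹ := by
    intro s hs i
    have hg : AEStronglyMeasurable (fun x => Real.exp (s * x)) (μ.map (Y i)) :=
      Continuous.aestronglyMeasurable (by continuity)
    rw [mgf, ← integral_map (hmeas i).aemeasurable hg, hlap i]
    exact (laplace_exp hb hs).2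
  -- mgf of the sum
  have hmgfS : ∀ s : ℝ, |s| < b⁻¹ → mgf (∑ i, Y i) μ s = ((1 - s^2*b^2)⁻¹)^k := by
    intro s hs
    rw [hindep.mgf_sum hmeas]
    rw [Finset.prod_congr rfl (fun i _ => hmgf s hs i), Finset.prod_const, Finset.card_univ,
      Fintype.card_fin]
  have hIntS : ∀ s : ℝ, |s| < b⁻¹ →
      Integrable (fun ω => Real.exp (s * (∑ i, Y i) ω)) μ :=
    fun s hs => hindep.integrable_exp_mul_sum hmeas (fun i _ => hInt s hs i)
  set ε : ℝ := 2 * b * Real.sqrt (2 * L) * max (Real.sqrt k) (Real.sqrt L) with hεdef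
  -- key numeric facts
  have hmono : Monotone Real.sqrt := fun a b h => Real.sqrt_le_sqrt h
  have hmax : max (Real.sqrt (k:ℝ)) (Real.sqrt L) = Real.sqrt m := by
    rw [hmdef]; exact (hmono.map_max).symm
  have htε : t * ε = 2 * L := by
    rw [hεdef, hmax]
    have : t * (2 * b * Real.sqrt (2*L) * Real.sqrt m)
        = 2 * ((t * b) * (Real.sqrt (2*L) * Real.sqrt m)) := by ring
    rw [this, htb, ← Real.sqrt_mul (by positivity), ← Real.sqrt_mul hquot.le]
    rw [show L / (2*m) * (2*L*m) = L^2 by field_simp, Real.sqrt_sq hL.le]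
  have hexp_arg : -(t*ε) + (k:ℝ) * (2 * (t^2*b^2)) ≤ -L := by
    rw [htε, htbsq]
    have h1 : (k:ℝ) * (2 * (L / (2*m))) = (k:ℝ) * L / m := by field_simp
    rw [h1]
    have h2 : (k:ℝ) * L / m ≤ L := by
      rw [div_le_iff₀ hm]
      nlinarith
    linarith
  -- the mgf bound
  have hmgf_le : ∀ s : ℝ, s^2 = t^2 → ((1 - s^2*b^2)⁻¹)^k ≤ Real.exp ((k:ℝ) * (2 * (t^2*b^2))) := by
    intro s hs
    rw [hs]
    set x : ℝ := t^2*b^2 with hxdef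
    have hx0 : 0 ≤ x := by positivity
    have h1x : 0 < 1 - x := by linarith [hx_half]
    have hexp : 1 + 2*x ≤ Real.exp (2*x) := by
      have := Real.add_one_le_exp (2*x); linarith
    have hinv : (1-x)⁻¹ ≤ 1 + 2*x := by
      rw [← one_div, div_le_iff₀ h1x]
      nlinarith [hx_half]
    have hone : (1-x)⁻¹ ≤ Real.exp (2*x) := le_trans hinv hexp
    calc ((1-x)⁻¹)^k ≤ (Real.exp (2*x))^k :=
          pow_le_pow_left₀ (inv_pos.mpr h1x).le hone k
      _ = Real.exp ((k:ℝ) * (2*x)) := by rw [← Real.exp_nat_mul]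
  -- Chernoff for upper tail
  have hup : (μ {ω | ε ≤ (∑ i, Y i) ω}).toReal ≤ β / 2 := by
    have h := measure_ge_le_exp_mul_mgf (μ := μ) (X := ∑ i, Y i) ε ht_pos.le (hIntS t ht_lt)
    refine h.trans ?_
    rw [hmgfS t ht_lt]
    calc Real.exp (-t * ε) * ((1 - t^2*b^2)⁻¹)^k
        ≤ Real.exp (-t * ε) * Real.exp ((k:ℝ) * (2 * (t^2*b^2))) := by
          exact mul_le_mul_of_nonneg_left (hmgf_le t rfl) (Real.exp_pos _).le
      _ = Real.exp (-(t*ε) + (k:ℝ) * (2 * (t^2*b^2))) := by rw [← Real.exp_add]; ring_nf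
      _ ≤ Real.exp (-L) := Real.exp_le_exp.mpr hexp_arg
      _ = β / 2 := by
          rw [hLdef, Real.exp_neg, Real.exp_log (by positivity), inv_div]
  -- Chernoff for lower tail
  have hdown : (μ {ω | ε ≤ (-(∑ i, Y i)) ω}).toReal ≤ β / 2 := by
    have hIntneg : Integrable (fun ω => Real.exp (t * (-(∑ i, Y i)) ω)) μ := by
      have := hIntS (-t) ht_lt'
      refine this.congr ?_
      filter_upwards with ω
      simp [neg_mul, mul_neg]
    have h := measure_ge_le_exp_mul_mgf (μ := μ) (X := -(∑ i, Y i)) ε ht_pos.le hIntneg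
    refine h.trans ?_
    rw [mgf_neg, hmgfS (-t) ht_lt']
    calc Real.exp (-t * ε) * ((1 - (-t)^2*b^2)⁻¹)^k
        ≤ Real.exp (-t * ε) * Real.exp ((k:ℝ) * (2 * (t^2*b^2))) := by
          exact mul_le_mul_of_nonneg_left (hmgf_le (-t) (by ring)) (Real.exp_pos _).le
      _ = Real.exp (-(t*ε) + (k:ℝ) * (2 * (t^2*b^2))) := by rw [← Real.exp_add]; ring_nf
      _ ≤ Real.exp (-L) := Real.exp_le_exp.mpr hexp_arg
      _ = β / 2 := by
          rw [hLdef, Real.exp_neg, Real.exp_log (by positivity), inv_div]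
  -- combine
  have hsub : {ω | ε < |∑ i, Y i ω|}
      ⊆ {ω | ε ≤ (∑ i, Y i) ω} ∪ {ω | ε ≤ (-(∑ i, Y i)) ω} := by
    intro ω hω
    simp only [mem_setOf_eq] at hω
    have hsum : (∑ i, Y i) ω = ∑ i, Y i ω := by simp [Finset.sum_apply]
    rcases abs_cases (∑ i, Y i ω) with ⟨h1, _⟩ | ⟨h1, _⟩
    · left
      simp only [mem_setOf_eq, hsum]
      rw [h1] at hω
      linarith
    · right
      simp only [mem_setOf_eq, Pi.neg_apply, hsum]
      rw [h1] at hω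
      linarith
  calc μ {ω | ε < |∑ i, Y i ω|}
      ≤ μ ({ω | ε ≤ (∑ i, Y i) ω} ∪ {ω | ε ≤ (-(∑ i, Y i)) ω}) := measure_mono hsub
    _ ≤ μ {ω | ε ≤ (∑ i, Y i) ω} + μ {ω | ε ≤ (-(∑ i, Y i)) ω} := measure_union_le _ _
    _ ≤ ENNReal.ofReal (β/2) + ENNReal.ofReal (β/2) := by
        gcongr
        · rw [← ENNReal.ofReal_toReal (measure_ne_top μ _)]
          exact ENNReal.ofReal_le_ofReal hup
        · rw [← ENNReal.ofReal_toReal (measure_ne_top μ _)]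
          exact ENNReal.ofReal_le_ofReal hdown
    _ = ENNReal.ofReal β := by
        rw [← ENNReal.ofReal_add (by positivity) (by positivity)]
        norm_num
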